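/- arXiv:2510.20199 — 2 statements merged into one kernel-verified Lean document; each statement's English description precedes it below -/
import Mathlib

section
/- Let (Ω, 𝔉) be a measurable space, γ ∈ (0,1), and for each τ ∈ ℕ let p_τ be a probability measure on Ω. Let r_0, r_1, …, r_m : Ω → ℝ be bounded measurable functions, β_0, β_1, …, β_m > 0, and λ = (λ_1, …, λ_m) with λ_i ≥ 0. For t = (t_0, …, t_m) ∈ ℝ^{m+1} define L(t) = Σ_{τ=0}^∞ γ^τ [ ∫ (t_0 − (1/β_0)(t_0 − r_0)_+) dp_τ + Σ_{i=1}^m λ_i ∫ (t_i − (1/β_i)(t_i − r_i)_+) dp_τ ], where (x)_+ = max(x,0). Then for all t̃, t̄ ∈ ℝ^{m+1}, |L(t̃) − L(t̄)| ≤ (1−γ)^{-1} √( (1 + 1/β_0)² + Σ_{i=1}^m λ_i² (1 + 1/β_i)² ) · ‖t̃ − t̄‖₂. -/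
open MeasureTheory

set_option maxHeartbeats 1000000

/-- the Lagrangian of the risk-constrained RL problem (for a fixed policy),
viewed as a function of the OCE auxiliary vector `t ∈ ℝ^{m+1}`, is Lipschitz with
constant `(1-γ)⁻¹ √((1+1/β₀)² + Σᵢ λᵢ²(1+1/βᵢ)²)` (Euclidean norm on `t`). -/
theorem lagrangian_lipschitz_in_t
    {Ω : Type*} [MeasurableSpace Ω] {m : ℕ}
    (γ : ℝ) (hγ : γ ∈ Set.Ioo (0:ℝ) 1)
    (p : ℕ → Measure Ω) (hp : ∀ τ, IsProbabilityMeasure (p τ))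
    (r : Fin (m+1) → Ω → ℝ)
    (hrm : ∀ i, Measurable (r i))
    (hrb : ∀ i, ∃ M : ℝ, ∀ ω, |r i ω| ≤ M)
    (β : Fin (m+1) → ℝ) (hβ : ∀ i, 0 < β i)
    (lam : Fin m → ℝ) (hlam : ∀ i, 0 ≤ lam i)
    (L : (Fin (m+1) → ℝ) → ℝ)
    (hL : ∀ t : Fin (m+1) → ℝ,
      L t = ∑' τ : ℕ, γ ^ τ *
        ((∫ ω, (t 0 - (1 / β 0) * max (t 0 - r 0 ω) 0) ∂(p τ))
          + ∑ i : Fin m, lam i *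
              ∫ ω, (t i.succ - (1 / β i.succ) * max (t i.succ - r i.succ ω) 0) ∂(p τ))) :
    ∀ t₁ t₂ : Fin (m+1) → ℝ,
      |L t₁ - L t₂|
        ≤ (1 - γ)⁻¹ *
            Real.sqrt ((1 + 1 / β 0) ^ 2
              + ∑ i : Fin m, (lam i) ^ 2 * (1 + 1 / β i.succ) ^ 2) *
            Real.sqrt (∑ j : Fin (m+1), (t₁ j - t₂ j) ^ 2) := by
  intro t₁ t₂
  obtain ⟨hγ0, hγ1⟩ := hγ
  choose M hM using hrb
  -- the per-time-step function
  set F : ℕ → (Fin (m+1) → ℝ) → ℝ := fun τ t =>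
    (∫ ω, (t 0 - (1 / β 0) * max (t 0 - r 0 ω) 0) ∂(p τ))
      + ∑ i : Fin m, lam i *
          ∫ ω, (t i.succ - (1 / β i.succ) * max (t i.succ - r i.succ ω) 0) ∂(p τ)
    with hF
  have hβinv : ∀ i, 0 ≤ 1 / β i := fun i => le_of_lt (div_pos one_pos (hβ i))
  have hcnn0 : (0:ℝ) ≤ 1 + 1 / β 0 := by linarith [hβinv 0]
  -- integrability
  have hinteg : ∀ (τ : ℕ) (i : Fin (m+1)) (a : ℝ),
      Integrable (fun ω => a - (1 / β i) * max (a - r i ω) 0) (p τ) := by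
    intro τ i a
    have hmeas : Measurable (fun ω => a - (1 / β i) * max (a - r i ω) 0) := by
      apply Measurable.sub measurable_const
      exact Measurable.const_mul (((hrm i).const_sub a).max measurable_const) _
    have := hp τ
    refine Integrable.mono' (integrable_const (|a| + (1 / β i) * (|a| + M i)))
      hmeas.aestronglyMeasurable ?_
    filter_upwards with ω
    rw [Real.norm_eq_abs]
    calc |a - (1 / β i) * max (a - r i ω) 0|
        ≤ |a| + |(1 / β i) * max (a - r i ω) 0| := abs_sub _ _
      _ ≤ |a| + (1 / β i) * (|a| + M i) := by
          refine add_le_add le_rfl ?_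
          rw [abs_mul, abs_of_nonneg (hβinv i)]
          refine mul_le_mul_of_nonneg_left ?_ (hβinv i)
          rw [abs_of_nonneg (le_max_right _ _)]
          calc max (a - r i ω) 0 ≤ |a - r i ω| := max_le (le_abs_self _) (abs_nonneg _)
            _ ≤ |a| + |r i ω| := abs_sub _ _
            _ ≤ |a| + M i := add_le_add le_rfl (hM i ω)
  -- bound on each single integral
  have hintbound : ∀ (τ : ℕ) (i : Fin (m+1)) (a : ℝ),
      |∫ ω, (a - (1 / β i) * max (a - r i ω) 0) ∂(p τ)| ≤ |a| + (1 / β i) * (|a| + M i) := by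
    intro τ i a
    have := hp τ
    rw [← Real.norm_eq_abs]
    calc ‖∫ ω, (a - (1 / β i) * max (a - r i ω) 0) ∂(p τ)‖
        ≤ (|a| + (1 / β i) * (|a| + M i)) * ((p τ) Set.univ).toReal := by
          apply norm_integral_le_of_norm_le_const
          filter_upwards with ω
          rw [Real.norm_eq_abs]
          calc |a - (1 / β i) * max (a - r i ω) 0|
              ≤ |a| + |(1 / β i) * max (a - r i ω) 0| := abs_sub _ _
            _ ≤ |a| + (1 / β i) * (|a| + M i) := by
                refine add_le_add le_rfl ?_
                rw [abs_mul, abs_of_nonneg (hβinv i)]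
                refine mul_le_mul_of_nonneg_left ?_ (hβinv i)
                rw [abs_of_nonneg (le_max_right _ _)]
                calc max (a - r i ω) 0 ≤ |a - r i ω| := max_le (le_abs_self _) (abs_nonneg _)
                  _ ≤ |a| + |r i ω| := abs_sub _ _
                  _ ≤ |a| + M i := add_le_add le_rfl (hM i ω)
      _ = |a| + (1 / β i) * (|a| + M i) := by simp
  -- Lipschitz estimate for each single integral
  have hdiff : ∀ (τ : ℕ) (i : Fin (m+1)) (a b : ℝ),
      |(∫ ω, (a - (1 / β i) * max (a - r i ω) 0) ∂(p τ))
        - (∫ ω, (b - (1 / β i) * max (b - r i ω) 0) ∂(p τ))|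
        ≤ (1 + 1 / β i) * |a - b| := by
    intro τ i a b
    have := hp τ
    rw [← integral_sub (hinteg τ i a) (hinteg τ i b), ← Real.norm_eq_abs]
    calc ‖∫ ω, ((a - (1 / β i) * max (a - r i ω) 0)
            - (b - (1 / β i) * max (b - r i ω) 0)) ∂(p τ)‖
        ≤ ((1 + 1 / β i) * |a - b|) * ((p τ) Set.univ).toReal := by
          apply norm_integral_le_of_norm_le_const
          filter_upwards with ω
          rw [Real.norm_eq_abs]
          have h1 : (a - (1 / β i) * max (a - r i ω) 0)
              - (b - (1 / β i) * max (b - r i ω) 0)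
              = (a - b) - (1 / β i) * (max (a - r i ω) 0 - max (b - r i ω) 0) := by ring
          rw [h1]
          have h2 : |max (a - r i ω) 0 - max (b - r i ω) 0| ≤ |a - b| := by
            calc |max (a - r i ω) 0 - max (b - r i ω) 0|
                ≤ |(a - r i ω) - (b - r i ω)| := abs_max_sub_max_le_abs _ _ _
              _ = |a - b| := by ring_nf
          calc |(a - b) - (1 / β i) * (max (a - r i ω) 0 - max (b - r i ω) 0)|
              ≤ |a - b| + |(1 / β i) * (max (a - r i ω) 0 - max (b - r i ω) 0)| := abs_sub _ _
            _ ≤ |a - b| + (1 / β i) * |a - b| := by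
                refine add_le_add le_rfl ?_
                rw [abs_mul, abs_of_nonneg (hβinv i)]
                exact mul_le_mul_of_nonneg_left h2 (hβinv i)
            _ = (1 + 1 / β i) * |a - b| := by ring
      _ = (1 + 1 / β i) * |a - b| := by simp
  -- coefficient vector
  set c : Fin (m+1) → ℝ := fun j => Fin.cases (1 + 1 / β 0) (fun i => lam i * (1 + 1 / β i.succ)) j
    with hc
  have hc0 : c 0 = 1 + 1 / β 0 := rfl
  have hcs : ∀ i : Fin m, c i.succ = lam i * (1 + 1 / β i.succ) := fun i => rfl
  set K : ℝ := Real.sqrt ((1 + 1 / β 0) ^ 2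
      + ∑ i : Fin m, (lam i) ^ 2 * (1 + 1 / β i.succ) ^ 2) with hK
  set nrm : ℝ := Real.sqrt (∑ j : Fin (m+1), (t₁ j - t₂ j) ^ 2) with hnrm
  -- sum of squares of c
  have hcsq : ∑ j : Fin (m+1), (c j) ^ 2
      = (1 + 1 / β 0) ^ 2 + ∑ i : Fin m, (lam i) ^ 2 * (1 + 1 / β i.succ) ^ 2 := by
    rw [Fin.sum_univ_succ]
    congr 1
    refine Finset.sum_congr rfl fun i _ => ?_
    rw [hcs i, mul_pow]
  -- per-step Lipschitz bound
  have hFlip : ∀ τ : ℕ, |F τ t₁ - F τ t₂| ≤ K * nrm := by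
    intro τ
    have step1 : |F τ t₁ - F τ t₂| ≤ ∑ j : Fin (m+1), c j * |t₁ j - t₂ j| := by
      have hrw : F τ t₁ - F τ t₂
          = ((∫ ω, (t₁ 0 - (1 / β 0) * max (t₁ 0 - r 0 ω) 0) ∂(p τ))
              - (∫ ω, (t₂ 0 - (1 / β 0) * max (t₂ 0 - r 0 ω) 0) ∂(p τ)))
            + ∑ i : Fin m, lam i *
                ((∫ ω, (t₁ i.succ - (1 / β i.succ) * max (t₁ i.succ - r i.succ ω) 0) ∂(p τ))
                  - (∫ ω, (t₂ i.succ - (1 / β i.succ) * max (t₂ i.succ - r i.succ ω) 0) ∂(p τ))) := by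
        simp only [hF, mul_sub, Finset.sum_sub_distrib]
        ring
      rw [hrw, Fin.sum_univ_succ, hc0]
      calc _ ≤ |(∫ ω, (t₁ 0 - (1 / β 0) * max (t₁ 0 - r 0 ω) 0) ∂(p τ))
              - (∫ ω, (t₂ 0 - (1 / β 0) * max (t₂ 0 - r 0 ω) 0) ∂(p τ))|
            + |∑ i : Fin m, lam i *
                ((∫ ω, (t₁ i.succ - (1 / β i.succ) * max (t₁ i.succ - r i.succ ω) 0) ∂(p τ))
                  - (∫ ω, (t₂ i.succ - (1 / β i.succ) * max (t₂ i.succ - r i.succ ω) 0) ∂(p τ)))| :=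
          abs_add_le _ _
        _ ≤ (1 + 1 / β 0) * |t₁ 0 - t₂ 0|
            + ∑ i : Fin m, c i.succ * |t₁ i.succ - t₂ i.succ| := by
          refine add_le_add (hdiff τ 0 _ _) ?_
          calc |∑ i : Fin m, lam i *
                ((∫ ω, (t₁ i.succ - (1 / β i.succ) * max (t₁ i.succ - r i.succ ω) 0) ∂(p τ))
                  - (∫ ω, (t₂ i.succ - (1 / β i.succ) * max (t₂ i.succ - r i.succ ω) 0) ∂(p τ)))|
              ≤ ∑ i : Fin m, |lam i *
                ((∫ ω, (t₁ i.succ - (1 / β i.succ) * max (t₁ i.succ - r i.succ ω) 0) ∂(p τ))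
                  - (∫ ω, (t₂ i.succ - (1 / β i.succ) * max (t₂ i.succ - r i.succ ω) 0) ∂(p τ)))| :=
              Finset.abs_sum_le_sum_abs _ _
            _ ≤ ∑ i : Fin m, c i.succ * |t₁ i.succ - t₂ i.succ| := by
              refine Finset.sum_le_sum fun i _ => ?_
              rw [abs_mul, abs_of_nonneg (hlam i), hcs i, mul_assoc]
              exact mul_le_mul_of_nonneg_left (hdiff τ i.succ _ _) (hlam i)
    refine step1.trans ?_
    -- Cauchy–Schwarz
    have hcnn : ∀ j : Fin (m+1), 0 ≤ c j := by
      intro j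
      induction j using Fin.cases with
      | zero => rw [hc0]; exact hcnn0
      | succ i =>
        rw [hcs i]
        exact mul_nonneg (hlam i) (by linarith [hβinv i.succ])
    have hnn : (0:ℝ) ≤ ∑ j : Fin (m+1), c j * |t₁ j - t₂ j| :=
      Finset.sum_nonneg fun j _ => mul_nonneg (hcnn j) (abs_nonneg _)
    calc ∑ j : Fin (m+1), c j * |t₁ j - t₂ j|
        ≤ Real.sqrt (∑ j : Fin (m+1), (c j) ^ 2)
          * Real.sqrt (∑ j : Fin (m+1), |t₁ j - t₂ j| ^ 2) := by
          have hsq := Finset.sum_mul_sq_le_sq_mul_sq Finset.univ c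
            (fun j => |t₁ j - t₂ j|)
          have h1 : ∑ j : Fin (m+1), c j * |t₁ j - t₂ j|
              = Real.sqrt ((∑ j : Fin (m+1), c j * |t₁ j - t₂ j|) ^ 2) :=
            (Real.sqrt_sq hnn).symm
          rw [h1, ← Real.sqrt_mul (Finset.sum_nonneg fun j _ => sq_nonneg (c j))]
          exact Real.sqrt_le_sqrt hsq
      _ = K * nrm := by
          rw [hK, hnrm, hcsq]
          congr 1
          congr 1
          refine Finset.sum_congr rfl fun j _ => sq_abs _
  have hKnn : 0 ≤ K := Real.sqrt_nonneg _
  have hnrmnn : 0 ≤ nrm := Real.sqrt_nonneg _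
  -- summability
  have hsummable : ∀ t : Fin (m+1) → ℝ, Summable (fun τ => γ ^ τ * F τ t) := by
    intro t
    set B : ℝ := (|t 0| + (1 / β 0) * (|t 0| + M 0))
      + ∑ i : Fin m, lam i * (|t i.succ| + (1 / β i.succ) * (|t i.succ| + M i.succ)) with hB
    have hFb : ∀ τ, |F τ t| ≤ B := by
      intro τ
      calc |F τ t| ≤ |∫ ω, (t 0 - (1 / β 0) * max (t 0 - r 0 ω) 0) ∂(p τ)|
            + |∑ i : Fin m, lam i *
                ∫ ω, (t i.succ - (1 / β i.succ) * max (t i.succ - r i.succ ω) 0) ∂(p τ)| :=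
          abs_add_le _ _
        _ ≤ B := by
          rw [hB]
          refine add_le_add (hintbound τ 0 _) ?_
          calc _ ≤ ∑ i : Fin m, |lam i *
                ∫ ω, (t i.succ - (1 / β i.succ) * max (t i.succ - r i.succ ω) 0) ∂(p τ)| :=
              Finset.abs_sum_le_sum_abs _ _
            _ ≤ _ := by
              refine Finset.sum_le_sum fun i _ => ?_
              rw [abs_mul, abs_of_nonneg (hlam i)]
              exact mul_le_mul_of_nonneg_left (hintbound τ i.succ _) (hlam i)
    apply Summable.of_abs
    refine Summable.of_nonneg_of_le (fun n => abs_nonneg _) (fun n => ?_)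
      ((summable_geometric_of_lt_one hγ0.le hγ1).mul_right B)
    rw [abs_mul, abs_pow, abs_of_nonneg hγ0.le]
    exact mul_le_mul_of_nonneg_left (hFb n) (by positivity)
  -- conclude
  rw [hL t₁, hL t₂, ← Summable.tsum_sub (hsummable t₁) (hsummable t₂)]
  have hsubeq : ∀ τ : ℕ, γ ^ τ * F τ t₁ - γ ^ τ * F τ t₂ = γ ^ τ * (F τ t₁ - F τ t₂) := by
    intro τ; ring
  simp only [hsubeq]
  have habs : Summable (fun τ => |γ ^ τ * (F τ t₁ - F τ t₂)|) := by
    refine Summable.of_nonneg_of_le (fun n => abs_nonneg _) (fun n => ?_)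
      ((summable_geometric_of_lt_one hγ0.le hγ1).mul_right (K * nrm))
    rw [abs_mul, abs_pow, abs_of_nonneg hγ0.le]
    exact mul_le_mul_of_nonneg_left (hFlip n) (by positivity)
  calc |∑' τ : ℕ, γ ^ τ * (F τ t₁ - F τ t₂)|
      ≤ ∑' τ : ℕ, |γ ^ τ * (F τ t₁ - F τ t₂)| := by
        have h := norm_tsum_le_tsum_norm (f := fun τ : ℕ => γ ^ τ * (F τ t₁ - F τ t₂))
          (by simpa only [Real.norm_eq_abs] using habs)
        simpa only [Real.norm_eq_abs] using h
    _ ≤ ∑' τ : ℕ, γ ^ τ * (K * nrm) := by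
        refine Summable.tsum_le_tsum (fun τ => ?_) habs
          ((summable_geometric_of_lt_one hγ0.le hγ1).mul_right (K * nrm))
        rw [abs_mul, abs_pow, abs_of_nonneg hγ0.le]
        exact mul_le_mul_of_nonneg_left (hFlip τ) (by positivity)
    _ = (1 - γ)⁻¹ * K * nrm := by
        rw [tsum_mul_right, tsum_geometric_of_lt_one hγ0.le hγ1]
        ring
end

section
/- Let (Ω, 𝔉, μ) be a probability space and let Z : Ω → ℝ be measurable with a ≤ Z ≤ b μ-almost everywhere for some a, b ∈ ℝ. For β ∈ (0,1) define ρ(β) = sup_{t ∈ ℝ} ( t − (1/β)∫(t − Z)_+ dμ ), where (x)_+ = max(x,0). Then ρ(β) tends to essInf Z (the μ-essential infimum of Z) as β tends to 0 from the right: lim_{β → 0⁺} ρ(β) = essInf Z. -/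
open MeasureTheory Filter

/-- as `β → 0⁺`, the reflected CVaR (supremal-convolution OCE) of a bounded
measurable reward `Z` converges to the essential infimum of `Z`. -/
theorem oce_tendsto_essInf
    {Ω : Type*} [MeasurableSpace Ω] (μ : Measure Ω) [IsProbabilityMeasure μ]
    (Z : Ω → ℝ) (hZm : Measurable Z)
    (a b : ℝ) (ha : ∀ᵐ ω ∂μ, a ≤ Z ω) (hb : ∀ᵐ ω ∂μ, Z ω ≤ b) :
    Tendsto (fun β : ℝ => ⨆ t : ℝ, (t - (1/β) * ∫ ω, max (t - Z ω) 0 ∂μ))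
      (nhdsWithin 0 (Set.Ioi 0)) (nhds (essInf Z μ)) := by
  set m := essInf Z μ with hm
  have hbdd : IsBoundedUnder (· ≥ ·) (ae μ) Z := ⟨a, ha⟩
  have hmZ : ∀ᵐ ω ∂μ, m ≤ Z ω := ae_essInf_le hbdd
  -- integrability of the positive part
  have hInt : ∀ t : ℝ, Integrable (fun ω => max (t - Z ω) 0) μ := by
    intro t
    refine Integrable.mono' (integrable_const (max (t - a) 0))
      ((measurable_const.sub hZm).max measurable_const).aestronglyMeasurable ?_
    filter_upwards [ha] with ω haω
    rw [Real.norm_eq_abs, abs_of_nonneg (le_max_right _ _)]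
    exact max_le_max (by linarith) le_rfl
  have hIntNonneg : ∀ t : ℝ, 0 ≤ ∫ ω, max (t - Z ω) 0 ∂μ := fun t =>
    integral_nonneg fun ω => le_max_right _ _
  -- integral vanishes at t = m
  have hIm : ∫ ω, max (m - Z ω) 0 ∂μ = 0 := by
    have hae0 : (fun ω => max (m - Z ω) 0) =ᵐ[μ] fun _ => (0 : ℝ) := by
      filter_upwards [hmZ] with ω hω
      exact max_eq_right (by linarith)
    rw [integral_congr_ae hae0, integral_zero]
  rw [Metric.tendsto_nhdsWithin_nhds]
  intro ε hε
  set s : Set Ω := {ω | Z ω < m + ε / 2} with hs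
  have hsm : MeasurableSet s := hZm measurableSet_Iio
  have hsne : μ s ≠ 0 := by
    intro h0
    have hae : ∀ᵐ ω ∂μ, m + ε / 2 ≤ Z ω := by
      rw [ae_iff]
      convert h0 using 2
      ext ω; simp [hs, not_le]
    have hcob : IsCoboundedUnder (· ≥ ·) (ae μ) Z :=
      IsBoundedUnder.isCoboundedUnder_ge ⟨b, hb⟩
    have : m + ε / 2 ≤ m := le_liminf_of_le hcob hae
    linarith
  have hp : 0 < (μ s).toReal :=
    ENNReal.toReal_pos hsne (measure_ne_top μ s)
  set p := (μ s).toReal with hpdef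
  refine ⟨p, hp, ?_⟩
  intro β hβ hβd
  have hβ0 : 0 < β := hβ
  have hβp : β < p := by
    have := hβd
    rw [Real.dist_eq, sub_zero, abs_of_pos hβ0] at this
    exact this
  have hβinv : 0 < 1 / β := by positivity
  -- upper bound: every term ≤ m + ε/2
  have hub : ∀ t : ℝ, t - (1/β) * ∫ ω, max (t - Z ω) 0 ∂μ ≤ m + ε / 2 := by
    intro t
    rcases le_or_gt t (m + ε / 2) with h | h
    · nlinarith [hIntNonneg t, hβinv.le, mul_nonneg hβinv.le (hIntNonneg t)]
    · have hlow : (t - (m + ε / 2)) * p ≤ ∫ ω, max (t - Z ω) 0 ∂μ := by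
        calc (t - (m + ε / 2)) * p ≤ ∫ ω in s, max (t - Z ω) 0 ∂μ := by
              rw [mul_comm]
              refine setIntegral_ge_of_const_le hsm (measure_ne_top μ s) ?_
                ((hInt t).integrableOn)
              intro ω hω
              have : Z ω < m + ε / 2 := hω
              exact le_trans (by linarith) (le_max_left _ _)
          _ ≤ ∫ ω, max (t - Z ω) 0 ∂μ :=
              setIntegral_le_integral (hInt t) (Eventually.of_forall fun ω => le_max_right _ _)
      have h1 : 1 ≤ (1/β) * p := by
        rw [one_div, ← div_eq_inv_mul, le_div_iff₀ hβ0]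
        linarith
      have : (1/β) * ((t - (m + ε / 2)) * p) ≤ (1/β) * ∫ ω, max (t - Z ω) 0 ∂μ :=
        mul_le_mul_of_nonneg_left hlow hβinv.le
      nlinarith
  have hbdd' : BddAbove (Set.range fun t : ℝ => t - (1/β) * ∫ ω, max (t - Z ω) 0 ∂μ) :=
    ⟨m + ε / 2, by rintro _ ⟨t, rfl⟩; exact hub t⟩
  have hle : (⨆ t : ℝ, (t - (1/β) * ∫ ω, max (t - Z ω) 0 ∂μ)) ≤ m + ε / 2 :=
    ciSup_le hub
  have hge : m ≤ ⨆ t : ℝ, (t - (1/β) * ∫ ω, max (t - Z ω) 0 ∂μ) := by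
    have := le_ciSup hbdd' m
    rw [hIm] at this
    simpa using this
  rw [Real.dist_eq]
  rw [abs_of_nonneg (by linarith)]
  linarith
end
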